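/- Let W be Binomial(m, 1/n)-distributed with m ≤ n (the marginal of a uniform multinomial with m trials over n cells). For every real t, the moment generating function satisfies (E[e^{tW}] − 1)/E[W] ≤ t + (t²/2) e^{|t|} (1 + (e^{|t|} − 1)/n)^n (1 + e^{|t|} − 1/n). In particular, sup_n (E[e^{tW}] − 1)/E[W] is finite for each t, bounded by t + (t²/2) e^{|t| + e^{|t|} − 1}(1 + e^{|t|}) in the limit. -/

import Mathlib

open MeasureTheory Real Finset ENNReal

lemma my_exp_quad (x : ℝ) : Real.exp x ≤ 1 + x + x ^ 2 / 2 * Real.exp |x| := by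
  rcases le_or_gt x 0 with hx | hx
  · have h1 : Real.exp x ≤ 1 + x + x ^ 2 / 2 := by
      have h2 : 1 + (-x) + (-x) ^ 2 / 2 ≤ Real.exp (-x) := Real.quadratic_le_exp_of_nonneg (by linarith)
      have h3 : Real.exp x * Real.exp (-x) = 1 := by
        rw [← Real.exp_add]; simp
      have hq : (0:ℝ) < 1 + x + x ^ 2 / 2 := by nlinarith
      have he : (0:ℝ) < Real.exp x := Real.exp_pos x
      nlinarith [sq_nonneg (x^2)]
    have : (1:ℝ) ≤ Real.exp |x| := Real.one_le_exp (abs_nonneg x)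
    nlinarith [sq_nonneg x]
  · have hm : ∀ y ∈ Set.Ici (0:ℝ), HasDerivAt (fun z => 1 + z + z ^ 2 / 2 * Real.exp z - Real.exp z)
        (1 + (y * Real.exp y + y ^ 2 / 2 * Real.exp y) - Real.exp y) y := by
      intro y _
      have h1 : HasDerivAt (fun z : ℝ => z ^ 2 / 2) y y := by
        have := (hasDerivAt_pow 2 y).div_const 2
        simpa using this
      have h2 := h1.mul (Real.hasDerivAt_exp y)
      have h3 := ((hasDerivAt_id y).const_add 1).add h2
      have h4 := h3.sub (Real.hasDerivAt_exp y)
      exact h4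
    have hmono : MonotoneOn (fun z => 1 + z + z ^ 2 / 2 * Real.exp z - Real.exp z) (Set.Ici 0) := by
      apply monotoneOn_of_deriv_nonneg (convex_Ici 0)
      · exact Continuous.continuousOn (by continuity)
      · intro y hy
        exact (hm y (interior_subset hy)).differentiableAt.differentiableWithinAt
      · intro y hy
        rw [(hm y (interior_subset hy)).deriv]
        have h5 := Real.add_one_le_exp (-y)
        have h6 : Real.exp (-y) * Real.exp y = 1 := by rw [← Real.exp_add]; simp
        have hy0 : 0 ≤ y := interior_subset hy
        nlinarith [Real.exp_pos y, sq_nonneg y]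
    have := hmono (Set.self_mem_Ici) (Set.mem_Ici.2 hx.le) hx.le
    simp only at this
    rw [abs_of_pos hx]
    simpa using this

lemma my_S0 (m : ℕ) (a b : ℝ) :
    ∑ k ∈ Finset.range (m+1), (m.choose k : ℝ) * a ^ k * b ^ (m-k) = (a+b)^m := by
  rw [add_pow]
  exact Finset.sum_congr rfl fun k _ => by ring

lemma my_choose_cast (M j : ℕ) : ((j:ℝ)+1) * ((M+1).choose (j+1) : ℝ) = ((M:ℝ)+1) * (M.choose j : ℝ) := by
  have h : ((M+1) * M.choose j : ℕ) = ((M+1).choose (j+1) * (j+1) : ℕ) := by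
    simpa [Nat.succ_eq_add_one] using Nat.add_one_mul_choose_eq M j
  have := congrArg (fun x : ℕ => (x:ℝ)) h
  push_cast at this
  linarith

lemma my_S1 (m : ℕ) (a b : ℝ) :
    ∑ k ∈ Finset.range (m+1), (k : ℝ) * ((m.choose k : ℝ) * a ^ k * b ^ (m-k))
      = m * a * (a+b) ^ (m-1) := by
  cases m with
  | zero => simp
  | succ M =>
    rw [Finset.sum_range_succ']
    simp only [Nat.cast_zero, zero_mul, add_zero, Nat.add_sub_cancel]
    rw [← my_S0 M a b, Finset.mul_sum]
    apply Finset.sum_congr rfl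
    intro j hj
    have h := my_choose_cast M j
    have hsub : (M+1-(j+1)) = M - j := by omega
    rw [hsub, pow_succ]
    push_cast
    linear_combination (a ^ j * a * b ^ (M - j)) * h

lemma my_S2 (m : ℕ) (a b : ℝ) :
    ∑ k ∈ Finset.range (m+1), (k : ℝ) * ((k:ℝ)-1) * ((m.choose k : ℝ) * a ^ k * b ^ (m-k))
      = m * ((m:ℝ)-1) * a^2 * (a+b) ^ (m-2) := by
  match m with
  | 0 => simp
  | 1 => norm_num [Finset.sum_range_succ]
  | (M+2) =>
    rw [Finset.sum_range_succ', Finset.sum_range_succ']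
    simp only [Nat.cast_zero, zero_mul, add_zero, Nat.cast_one, Nat.cast_add, Nat.add_sub_cancel]
    norm_num
    rw [← my_S0 M a b, Finset.mul_sum]
    apply Finset.sum_congr rfl
    intro j hj
    have h1 := my_choose_cast (M+1) (j+1)
    have h2 := my_choose_cast M j
    have hsub : (M+2-(j+1+1)) = M - j := by omega
    rw [hsub]
    push_cast at h1 h2 ⊢
    linear_combination ((j:ℝ)+1) * (a^2*a^j*b^(M-j)) * h1 + ((M:ℝ)+2) * (a^2*a^j*b^(M-j)) * h2

lemma my_integral_partition {Ω : Type*} [MeasurableSpace Ω] (μ : Measure Ω) [IsProbabilityMeasure μ]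
    (m : ℕ) (W : Ω → ℕ) (hWle : ∀ ω, W ω ≤ m)
    (p : ℕ → ℝ) (hp0 : ∀ k, 0 ≤ p k)
    (hW : ∀ k, μ {ω | W ω = k} = ENNReal.ofReal (p k))
    (hsum : ∑ k ∈ Finset.range (m+1), p k = 1)
    (f : ℕ → ℝ) :
    ∫ ω, f (W ω) ∂μ = ∑ k ∈ Finset.range (m+1), f k * p k := by
  set A : ℕ → Set Ω := fun k => {ω | W ω = k} with hA
  -- each A k is a.e. equal to a measurable set
  have hae : ∀ k ∈ Finset.range (m+1), A k =ᵐ[μ] toMeasurable μ (A k) := by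
    intro k hk
    set H := toMeasurable μ (A k) with hH
    set B : Set Ω := ⋃ j ∈ (Finset.range (m+1)).erase k, A j with hB
    set H' := toMeasurable μ B with hH'
    have hμB : μ B ≤ ENNReal.ofReal (1 - p k) := by
      refine le_trans (measure_biUnion_finset_le _ _) ?_
      have h1 : ∑ j ∈ (Finset.range (m+1)).erase k, μ (A j)
          = ENNReal.ofReal (∑ j ∈ (Finset.range (m+1)).erase k, p j) := by
        rw [ENNReal.ofReal_sum_of_nonneg (fun j _ => hp0 j)]
        exact Finset.sum_congr rfl fun j _ => hW j
      rw [h1]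
      apply ENNReal.ofReal_le_ofReal
      have h2 : p k + ∑ j ∈ (Finset.range (m+1)).erase k, p j = 1 := by
        rw [Finset.add_sum_erase _ p hk]; exact hsum
      linarith
    have hcover : (Set.univ : Set Ω) ⊆ H ∪ H' := by
      intro ω _
      by_cases hωk : W ω = k
      · exact Or.inl (subset_toMeasurable μ (A k) hωk)
      · refine Or.inr (subset_toMeasurable μ B ?_)
        simp only [hB, Set.mem_iUnion, exists_prop]
        exact ⟨W ω, Finset.mem_erase.2 ⟨hωk, Finset.mem_range.2 (Nat.lt_succ_of_le (hWle ω))⟩, rfl⟩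
    have hint0 : μ (H ∩ H') = 0 := by
      have h2 : μ (H ∪ H') + μ (H ∩ H') = μ H + μ H' :=
        measure_union_add_inter H (measurableSet_toMeasurable μ B)
      have h3 : μ H + μ H' ≤ 1 := by
        rw [measure_toMeasurable, measure_toMeasurable, hW k]
        calc ENNReal.ofReal (p k) + μ B ≤ ENNReal.ofReal (p k) + ENNReal.ofReal (1 - p k) :=
              add_le_add_right hμB _
          _ = ENNReal.ofReal 1 := by
              rw [← ENNReal.ofReal_add (hp0 k) (by
                have hle : p k ≤ 1 := by
                  have := Finset.single_le_sum (fun j (_ : j ∈ Finset.range (m+1)) => hp0 j) hk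
                  linarith
                linarith)]
              norm_num
          _ = 1 := ENNReal.ofReal_one
      have h4 : (1 : ℝ≥0∞) ≤ μ (H ∪ H') := by
        have h := measure_mono (μ := μ) hcover
        rwa [measure_univ] at h
      have h5 : (1:ℝ≥0∞) + μ (H ∩ H') ≤ 1 + 0 := by
        calc (1:ℝ≥0∞) + μ (H ∩ H') ≤ μ (H ∪ H') + μ (H ∩ H') := add_le_add_left h4 _
          _ = μ H + μ H' := h2
          _ ≤ 1 := h3
          _ = 1 + 0 := by ring
      have := ENNReal.le_of_add_le_add_left (by simp : (1:ℝ≥0∞) ≠ ⊤) h5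
      exact le_antisymm this zero_le
    rw [MeasureTheory.ae_eq_set]
    constructor
    · have he : A k \ H = ∅ := Set.diff_eq_empty.2 (subset_toMeasurable μ (A k))
      simp [he]
    · refine measure_mono_null ?_ hint0
      intro ω hω
      rcases hω with ⟨hω1, hω2⟩
      refine ⟨hω1, subset_toMeasurable μ B ?_⟩
      simp only [hB, Set.mem_iUnion, exists_prop]
      have hωk : W ω ≠ k := hω2
      exact ⟨W ω, Finset.mem_erase.2 ⟨hωk, Finset.mem_range.2 (Nat.lt_succ_of_le (hWle ω))⟩, rfl⟩
  -- rewrite f ∘ W as a sum of indicators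
  have hfW : ∀ ω, f (W ω) = ∑ k ∈ Finset.range (m+1), Set.indicator (A k) (fun _ => f k) ω := by
    intro ω
    rw [Finset.sum_eq_single_of_mem (W ω) (Finset.mem_range.2 (Nat.lt_succ_of_le (hWle ω)))]
    · simp [hA, Set.indicator_of_mem, Set.mem_setOf_eq]
    · intro j _ hj
      apply Set.indicator_of_notMem
      simp only [hA, Set.mem_setOf_eq]
      exact fun h => hj (h ▸ rfl)
  have hInt : ∀ k ∈ Finset.range (m+1), Integrable (Set.indicator (A k) (fun _ => f k)) μ := by
    intro k hk
    refine Integrable.congr ?_ (indicator_ae_eq_of_ae_eq_set (hae k hk)).symm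
    exact (integrable_const (f k)).indicator (measurableSet_toMeasurable μ (A k))
  calc ∫ ω, f (W ω) ∂μ = ∫ ω, ∑ k ∈ Finset.range (m+1), Set.indicator (A k) (fun _ => f k) ω ∂μ := by
        congr 1; funext ω; exact hfW ω
    _ = ∑ k ∈ Finset.range (m+1), ∫ ω, Set.indicator (A k) (fun _ => f k) ω ∂μ :=
        integral_finset_sum _ hInt
    _ = ∑ k ∈ Finset.range (m+1), f k * p k := by
        apply Finset.sum_congr rfl
        intro k hk
        rw [integral_congr_ae (indicator_ae_eq_of_ae_eq_set (hae k hk))]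
        rw [integral_indicator_const (f k) (measurableSet_toMeasurable μ (A k))]
        rw [measureReal_def, measure_toMeasurable, hW k, ENNReal.toReal_ofReal (hp0 k)]
        simp [mul_comm]

/-- For `W ~ Bin(m, 1/n)` with `1 ≤ m ≤ n`, the moment generating function
satisfies `(E[e^{tW}] − 1)/E[W] ≤ t + (t²/2)e^{|t|}(1 + (e^{|t|} − 1)/n)^n
(1 + e^{|t|} − 1/n)` for every real `t`. -/
theorem binomial_mgf_bound {Ω : Type*} [MeasurableSpace Ω]
    (μ : Measure Ω) [IsProbabilityMeasure μ]
    (n m : ℕ) (hm1 : 1 ≤ m) (hmn : m ≤ n)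
    (W : Ω → ℕ) (hWle : ∀ ω, W ω ≤ m)
    (hW : ∀ k : ℕ, μ {ω | W ω = k}
      = ENNReal.ofReal ((m.choose k : ℝ) * (1 / n) ^ k * (1 - 1 / n) ^ (m - k)))
    (t : ℝ) :
    ((∫ ω, Real.exp (t * (W ω : ℝ)) ∂μ) - 1) / (∫ ω, (W ω : ℝ) ∂μ)
      ≤ t + t ^ 2 / 2 * Real.exp |t| * (1 + (Real.exp |t| - 1) / n) ^ n
          * (1 + Real.exp |t| - 1 / n) := by
  have hn1 : 1 ≤ (n : ℝ) := by exact_mod_cast le_trans hm1 hmn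
  have hnpos : (0:ℝ) < n := by linarith
  have hm0 : (1:ℝ) ≤ (m:ℝ) := by exact_mod_cast hm1
  set a : ℝ := 1 / n with ha
  set b : ℝ := 1 - 1 / n with hb
  have ha0 : 0 ≤ a := by positivity
  have hb0 : 0 ≤ b := by
    rw [hb]
    have : 1 / (n:ℝ) ≤ 1 := by rw [div_le_one hnpos]; exact hn1
    linarith
  set p : ℕ → ℝ := fun k => (m.choose k : ℝ) * a ^ k * b ^ (m-k) with hp
  have hp0 : ∀ k, 0 ≤ p k := fun k => by
    exact mul_nonneg (mul_nonneg (Nat.cast_nonneg _) (pow_nonneg ha0 _)) (pow_nonneg hb0 _)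
  have hab : a + b = 1 := by rw [ha, hb]; ring
  have hsum : ∑ k ∈ Finset.range (m+1), p k = 1 := by
    simp only [hp]; rw [my_S0 m a b, hab, one_pow]
  have key := my_integral_partition μ m W hWle p hp0 (fun k => hW k) hsum
  have hS1v : ∑ k ∈ Finset.range (m+1), (k:ℝ) * p k = m / n := by
    simp only [hp]
    rw [my_S1 m a b, hab, one_pow, ha]
    ring
  have hEW : ∫ ω, (W ω : ℝ) ∂μ = (m:ℝ) / n := by
    rw [show (∫ ω, (W ω : ℝ) ∂μ) = ∑ k ∈ Finset.range (m+1), (k:ℝ) * p k from key _]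
    exact hS1v
  set c : ℝ := |t| with hc
  have hc0 : 0 ≤ c := abs_nonneg t
  set u : ℝ := Real.exp c with hu
  have hu1 : 1 ≤ u := Real.one_le_exp hc0
  set a' : ℝ := u / n with ha'
  set s : ℝ := 1 + (u - 1) / n with hs
  have hs1 : 1 ≤ s := by
    rw [hs]
    have : 0 ≤ (u - 1) / (n:ℝ) := div_nonneg (by linarith) (by linarith)
    linarith
  have hs0 : 0 ≤ s := by linarith
  have hab' : a' + b = s := by rw [ha', hb, hs]; ring
  set Q : ℝ := ∑ k ∈ Finset.range (m+1), (k:ℝ)^2 * Real.exp (c * k) * p k with hQdef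
  have hQeq : Q = (m:ℝ) * ((m:ℝ)-1) * a'^2 * s^(m-2) + (m:ℝ) * a' * s^(m-1) := by
    have hterm : ∀ k ∈ Finset.range (m+1), (k:ℝ)^2 * Real.exp (c * k) * p k
        = (k:ℝ) * ((k:ℝ)-1) * ((m.choose k : ℝ) * a'^k * b^(m-k))
          + (k:ℝ) * ((m.choose k : ℝ) * a'^k * b^(m-k)) := by
      intro k _
      have he : Real.exp (c * k) = u ^ k := by
        rw [mul_comm, Real.exp_nat_mul]
      simp only [hp, he, ha', ha, div_pow, one_pow]
      field_simp
      ring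
    rw [hQdef, Finset.sum_congr rfl hterm, Finset.sum_add_distrib,
      my_S1 m a' b, my_S2 m a' b, hab']
    try ring
  have hspow1 : s^(m-1) ≤ s^n := pow_le_pow_right₀ hs1 (by omega)
  have hspow2 : s^(m-2) ≤ s^n := pow_le_pow_right₀ hs1 (by omega)
  have hmncast : (m:ℝ) ≤ n := by exact_mod_cast hmn
  have hninv : 1/(n:ℝ) ≤ 1 := by rw [div_le_one hnpos]; exact hn1
  have h1 : ((m:ℝ)-1) * (u/n) ≤ u - 1/n := by
    have e1 : ((m:ℝ)-1) * (u/n) = (((m:ℝ)-1) * u) / n := by ring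
    have e2 : u - 1/(n:ℝ) = (u*n - 1)/n := by field_simp
    rw [e1, e2, div_le_div_iff₀ hnpos hnpos]
    nlinarith [mul_nonneg (sub_nonneg.2 hmncast) (by linarith : (0:ℝ) ≤ u)]
  have hinner : ((m:ℝ)-1) * (u/n) * s^(m-2) + s^(m-1) ≤ (1 + u - 1/n) * s^n := by
    have h2 : ((m:ℝ)-1) * (u/n) * s^(m-2) ≤ (u - 1/n) * s^n :=
      mul_le_mul h1 hspow2 (pow_nonneg hs0 _) (by linarith)
    calc ((m:ℝ)-1) * (u/n) * s^(m-2) + s^(m-1) ≤ (u - 1/n) * s^n + s^n := add_le_add h2 hspow1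
      _ = (1 + u - 1/n) * s^n := by ring
  have hQ : Q ≤ ((m:ℝ)/n) * (u * s^n * (1 + u - 1/n)) := by
    have e3 : Q = ((m:ℝ)/n) * u * (((m:ℝ)-1) * (u/n) * s^(m-2) + s^(m-1)) := by
      rw [hQeq, ha']; ring
    rw [e3]
    have h4 : (0:ℝ) ≤ ((m:ℝ)/n) * u := by positivity
    calc ((m:ℝ)/n) * u * (((m:ℝ)-1) * (u/n) * s^(m-2) + s^(m-1))
        ≤ ((m:ℝ)/n) * u * ((1 + u - 1/n) * s^n) := mul_le_mul_of_nonneg_left hinner h4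
      _ = ((m:ℝ)/n) * (u * s^n * (1 + u - 1/n)) := by ring
  have hpt : ∀ k ∈ Finset.range (m+1), Real.exp (t * (k:ℝ))
      ≤ 1 + t * k + t^2 * (k:ℝ)^2 / 2 * Real.exp (c * k) := by
    intro k _
    have h := my_exp_quad (t * (k:ℝ))
    rw [abs_mul, Nat.abs_cast] at h
    rw [← hc] at h
    rw [mul_pow] at h
    exact h
  have hE2sum : ∫ ω, Real.exp (t * (W ω : ℝ)) ∂μ
      = ∑ k ∈ Finset.range (m+1), Real.exp (t * (k:ℝ)) * p k := key (fun k => Real.exp (t * (k:ℝ)))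
  have hE2bound : ∑ k ∈ Finset.range (m+1), Real.exp (t * (k:ℝ)) * p k
      ≤ 1 + t * ((m:ℝ)/n) + t^2/2 * Q := by
    have h5 : ∑ k ∈ Finset.range (m+1), Real.exp (t * (k:ℝ)) * p k
        ≤ ∑ k ∈ Finset.range (m+1), (1 + t * k + t^2 * (k:ℝ)^2 / 2 * Real.exp (c * k)) * p k :=
      Finset.sum_le_sum fun k hk => mul_le_mul_of_nonneg_right (hpt k hk) (hp0 k)
    have h6 : ∑ k ∈ Finset.range (m+1), (1 + t * k + t^2 * (k:ℝ)^2 / 2 * Real.exp (c * k)) * p k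
        = (∑ k ∈ Finset.range (m+1), p k) + t * (∑ k ∈ Finset.range (m+1), (k:ℝ) * p k)
          + t^2/2 * Q := by
      rw [hQdef, Finset.mul_sum, Finset.mul_sum, ← Finset.sum_add_distrib, ← Finset.sum_add_distrib]
      exact Finset.sum_congr rfl fun k _ => by ring
    rw [h6, hsum, hS1v] at h5
    exact h5
  have hEWpos : (0:ℝ) < (m:ℝ)/n := by positivity
  rw [hEW, hE2sum, div_le_iff₀ hEWpos]
  have h7 : t^2/2 * Q ≤ t^2/2 * (((m:ℝ)/n) * (u * s^n * (1 + u - 1/n))) :=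
    mul_le_mul_of_nonneg_left hQ (by positivity)
  rw [ha]
  have h8 : (t + t^2/2 * u * s^n * (1+u-1/(n:ℝ))) * ((m:ℝ)/n)
      = t * ((m:ℝ)/n) + t^2/2 * (((m:ℝ)/n) * (u*s^n*(1+u-1/(n:ℝ)))) := by ring
  rw [h8]
  linarith [hE2bound, h7]
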